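/- Let X be a finite metric space with n points. For all sufficiently large t > 0, the matrix Z_{tX} with entries (Z_{tX})_{xx'} = exp(−t·d(x,x')) is invertible, and the magnitude |tX| (the sum of all entries of Z_{tX}^{−1}) tends to n as t → ∞. -/

import Mathlib

open Filter Topology

private lemma matrix_tendsto_one
    {X : Type*} [Fintype X] [DecidableEq X] [MetricSpace X] :
    Tendsto (fun t : ℝ => (Matrix.of fun x x' : X => Real.exp (-(t * dist x x'))))
      atTop (𝓝 (1 : Matrix X X ℝ)) := by
  refine tendsto_pi_nhds.mpr ?_
  intro x
  refine tendsto_pi_nhds.mpr ?_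
  intro x'
  by_cases h : x = x'
  · subst h
    simp only [Matrix.of_apply, dist_self, mul_zero, neg_zero, Real.exp_zero,
      Matrix.one_apply_eq]
    exact tendsto_const_nhds
  · have hd : 0 < dist x x' := dist_pos.2 h
    have : Tendsto (fun t : ℝ => -(t * dist x x')) atTop atBot :=
      tendsto_neg_atBot_iff.mpr (tendsto_id.atTop_mul_const hd)
    have h0 : Tendsto (fun t : ℝ => Real.exp (-(t * dist x x'))) atTop (𝓝 0) :=
      Real.tendsto_exp_atBot.comp this
    simpa [Matrix.one_apply_ne h] using h0

/-- For a finite metric space `X` with `n` points, the exponentiated distance matrix of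
the scaled space `tX` is invertible for all sufficiently large `t`, and the magnitude
`|tX|` (the sum of all entries of the inverse matrix) tends to `n` as `t → ∞`. -/
theorem magnitude_tendsto_card
    {X : Type*} [Fintype X] [DecidableEq X] [MetricSpace X] :
    (∀ᶠ t : ℝ in atTop,
      IsUnit (Matrix.of fun x x' : X => Real.exp (-(t * dist x x'))).det) ∧
    Tendsto
      (fun t : ℝ => ∑ x : X, ∑ x' : X,
        (Matrix.of fun x x' : X => Real.exp (-(t * dist x x')))⁻¹ x x')
      atTop (𝓝 (Fintype.card X : ℝ)) := by
  set F : ℝ → Matrix X X ℝ := fun t => Matrix.of fun x x' : X => Real.exp (-(t * dist x x'))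
  have hF : Tendsto F atTop (𝓝 (1 : Matrix X X ℝ)) := matrix_tendsto_one
  have hdet : Tendsto (fun t => (F t).det) atTop (𝓝 (1 : ℝ)) := by
    simpa [Function.comp_def] using ((Continuous.matrix_det (continuous_id : Continuous
      (id : Matrix X X ℝ → Matrix X X ℝ))).tendsto 1).comp hF
  have hev : ∀ᶠ t : ℝ in atTop, (F t).det ≠ 0 := by
    filter_upwards [hdet.eventually_ne one_ne_zero] with t ht using ht
  refine ⟨hev.mono fun t ht => isUnit_iff_ne_zero.2 ht, ?_⟩
  have hinv : Tendsto (fun t => (F t)⁻¹) atTop (𝓝 (1 : Matrix X X ℝ)) := by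
    have hadj : Tendsto (fun t => (F t).adjugate) atTop
        (𝓝 ((1 : Matrix X X ℝ).adjugate)) :=
      by exact ((Continuous.matrix_adjugate (continuous_id : Continuous
        (id : Matrix X X ℝ → Matrix X X ℝ))).tendsto 1).comp hF
    have h1 : Tendsto (fun t => ((F t).det)⁻¹ • (F t).adjugate) atTop
        (𝓝 (((1:ℝ))⁻¹ • (1 : Matrix X X ℝ).adjugate)) :=
      ((hdet.inv₀ one_ne_zero).smul hadj)
    have heq : ∀ t, (F t)⁻¹ = ((F t).det)⁻¹ • (F t).adjugate := fun t => by
      rw [Matrix.inv_def, Ring.inverse_eq_inv']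
    simpa [Matrix.adjugate_one] using h1.congr fun t => (heq t).symm
  have hsum : Tendsto
      (fun t => ∑ x : X, ∑ x' : X, (F t)⁻¹ x x') atTop
      (𝓝 (∑ x : X, ∑ x' : X, (1 : Matrix X X ℝ) x x')) := by
    refine tendsto_finset_sum _ fun x _ => tendsto_finset_sum _ fun x' _ => ?_
    exact tendsto_pi_nhds.mp (tendsto_pi_nhds.mp hinv x) x'
  have hval : (∑ x : X, ∑ x' : X, (1 : Matrix X X ℝ) x x') = (Fintype.card X : ℝ) := by
    simp [Matrix.one_apply, Finset.sum_ite_eq', Finset.card_univ]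
  rw [← hval]
  exact hsum
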